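/- The firing span is Weyl-equivariant and independent of the sign condition: for any weight λ, the span FS_{Φ⁺}(λ) := Span_ℝ{μ − λ : λ →* μ via positive-root central-firing} equals FS_Φ(λ) := Span_ℝ{μ − λ : λ →* μ via all-root central-firing}, and moreover FS_{Φ⁺}(wλ) = w·FS_{Φ⁺}(λ) for every Weyl group element w. -/

import Mathlib

open scoped RealInnerProductSpace

noncomputable section

namespace CF

variable {V : Type*} [NormedAddCommGroup V] [InnerProductSpace ℝ V]

/-- The coroot `α∨ = 2α/⟨α,α⟩`. -/
def coroot (α : V) : V := (2 / ⟪α, α⟫) • α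

/-- A reduced crystallographic root system in `V`. -/
def IsRootSystem (Φ : Set V) : Prop :=
  Φ.Finite ∧ (0 : V) ∉ Φ ∧ Submodule.span ℝ Φ = ⊤ ∧
    (∀ α ∈ Φ, ∀ β ∈ Φ, β - ⟪β, coroot α⟫ • α ∈ Φ) ∧
    (∀ α ∈ Φ, ∀ t : ℝ, t • α ∈ Φ → t = 1 ∨ t = -1) ∧
    (∀ α ∈ Φ, ∀ β ∈ Φ, ∃ n : ℤ, ⟪β, coroot α⟫ = (n : ℝ))

/-- A choice of positive roots `Φ⁺ ⊆ Φ` (exactly one of `±α` is positive, and the positive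
roots lie strictly on one side of a hyperplane). -/
def IsPositiveSystem (Φ Φp : Set V) : Prop :=
  Φp ⊆ Φ ∧ (∀ α ∈ Φ, (α ∈ Φp ∨ -α ∈ Φp) ∧ ¬(α ∈ Φp ∧ -α ∈ Φp)) ∧
    ∃ ℓ : V →ₗ[ℝ] ℝ, ∀ α ∈ Φp, 0 < ℓ α

/-- The weight lattice `P = {v : ⟨v, α∨⟩ ∈ ℤ for all α ∈ Φ}`. -/
def weightLattice (Φ : Set V) : Set V :=
  {v | ∀ α ∈ Φ, ∃ n : ℤ, ⟪v, coroot α⟫ = (n : ℝ)}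

/-- Central-firing: `λ → λ + α` whenever `α ∈ Φ⁺` and `⟨λ, α∨⟩ = 0`. -/
def fire (Φp : Set V) (lam mu : V) : Prop :=
  ∃ α ∈ Φp, ⟪lam, coroot α⟫ = 0 ∧ mu = lam + α

/-- The Weyl group: the group of linear isometries generated by the reflections `s_α`, `α ∈ Φ`. -/
def weylGroup (Φ : Set V) : Subgroup (V ≃ₗᵢ[ℝ] V) :=
  Subgroup.closure {g | ∃ α ∈ Φ, ∀ v, g v = v - ⟪v, coroot α⟫ • α}

/-- `v` and `w` lie in the same Weyl group orbit. -/
def sameOrbit (Φ : Set V) (v w : V) : Prop := ∃ g ∈ weylGroup Φ, g v = w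

def weylOrbit (Φ : Set V) (v : V) : Set V := {w | sameOrbit Φ v w}

/-- The root lattice `Q`. -/
def rootLattice (Φ : Set V) : AddSubgroup V := AddSubgroup.closure Φ

/-- `Π^Q(λ)`: the points of the permutohedron `Π(λ) = ConvexHull(Wλ)` lying in `λ + Q`. -/
def permQ (Φ : Set V) (lam : V) : Set V :=
  {mu | mu ∈ convexHull ℝ (weylOrbit Φ lam) ∧ lam - mu ∈ rootLattice Φ}

def IsDominant (Δ : Set V) (lam : V) : Prop := ∀ a ∈ Δ, 0 ≤ ⟪lam, coroot a⟫

def IsStrictlyDominant (Δ : Set V) (lam : V) : Prop := ∀ a ∈ Δ, 0 < ⟪lam, coroot a⟫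

/-- A minuscule weight: a nonzero dominant weight whose `Π^Q` consists of its Weyl orbit. -/
def IsMinuscule (Φ Δ : Set V) (w : V) : Prop :=
  w ≠ 0 ∧ IsDominant Δ w ∧ ∀ mu ∈ permQ Φ w, sameOrbit Φ w mu

/-- `Δ` is a system of simple roots for the positive system `Φ⁺`. -/
def IsSimpleSystem (Φp : Set V) (Δ : Finset V) : Prop :=
  (Δ : Set V) ⊆ Φp ∧ LinearIndependent ℝ (fun a : (Δ : Set V) => (a : V)) ∧
    ∀ α ∈ Φp, ∃ c : V → ℝ, (∀ a ∈ Δ, 0 ≤ c a) ∧ α = ∑ a ∈ Δ, c a • a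

def IsSimplyLaced (Φ : Set V) : Prop := ∀ α ∈ Φ, ∀ β ∈ Φ, ⟪α, α⟫ = ⟪β, β⟫

/-- Irreducibility: `Φ` cannot be split into two nonempty mutually orthogonal parts. -/
def IsIrreducibleRS (Φ : Set V) : Prop :=
  ¬ ∃ S T : Set V, S.Nonempty ∧ T.Nonempty ∧ S ∪ T = Φ ∧ ∀ a ∈ S, ∀ b ∈ T, ⟪a, b⟫ = 0

/-- The firing span `FS_S(λ) = Span_ℝ{μ − λ : λ →* μ}`. -/
def firingSpan (Φp : Set V) (lam : V) : Submodule ℝ V :=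
  Submodule.span ℝ {d | ∃ mu, Relation.ReflTransGen (fire Φp) lam mu ∧ d = mu - lam}

/-- Central-firing on Weyl orbits: `Wλ → Wμ` iff some representatives fire. -/
def ofire (Φ Φp : Set V) (lam mu : V) : Prop :=
  ∃ lam' mu', sameOrbit Φ lam lam' ∧ sameOrbit Φ mu mu' ∧ fire Φp lam' mu'

/-- Connectivity of roots within a subset `Ψ` (via non-orthogonality). -/
def sameComponent (Ψ : Set V) (β γ : V) : Prop :=
  Relation.ReflTransGen (fun x y => x ∈ Ψ ∧ y ∈ Ψ ∧ ⟪x, y⟫ ≠ 0) β γ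

/-- Confluence of central-firing from `λ`: all maximal firing sequences from `λ`
terminate at the same weight. -/
def ConfluentFrom (S : Set V) (lam : V) : Prop :=
  ∀ mu₁ mu₂ : V, Relation.ReflTransGen (fire S) lam mu₁ → (¬ ∃ ν, fire S mu₁ ν) →
    Relation.ReflTransGen (fire S) lam mu₂ → (¬ ∃ ν, fire S mu₂ ν) → mu₁ = mu₂

-- ====== auxiliary lemmas ======


lemma coroot_neg (α : V) : coroot (-α) = - coroot α := by
  simp [coroot, smul_neg]

lemma inner_coroot_self {γ : V} (h : ⟪γ, γ⟫ ≠ 0) : ⟪γ, coroot γ⟫ = (2:ℝ) := by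
  rw [coroot, real_inner_smul_right]
  field_simp

lemma inner_coroot_eq_zero_iff' (w : V → V) (hw : ∀ x y, ⟪w x, w y⟫ = ⟪x, y⟫) (b β : V) :
    ⟪w b, coroot (w β)⟫ = ⟪b, coroot β⟫ := by
  simp [coroot, real_inner_smul_right, hw]
  left; rw [← real_inner_self_eq_norm_sq, ← real_inner_self_eq_norm_sq, hw]

/-- reflection through the hyperplane orthogonal to γ -/
def rfl' (γ : V) (x : V) : V := x - ⟪x, coroot γ⟫ • γ

lemma rfl'_add (γ x y : V) : rfl' γ (x + y) = rfl' γ x + rfl' γ y := by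
  simp only [rfl', inner_add_left, add_smul]; abel

lemma rfl'_inner {γ : V} (h : ⟪γ, γ⟫ ≠ 0) (x y : V) : ⟪rfl' γ x, rfl' γ y⟫ = ⟪x, y⟫ := by
  simp only [rfl', coroot, real_inner_smul_right, real_inner_smul_left, inner_sub_left,
    inner_sub_right, smul_smul]
  rw [real_inner_comm γ x, real_inner_comm y γ]
  field_simp
  ring

lemma rfl'_invol {γ : V} (h : ⟪γ, γ⟫ ≠ 0) (x : V) : rfl' γ (rfl' γ x) = x := by
  simp only [rfl', inner_sub_left, real_inner_smul_left, inner_coroot_self h, sub_smul, smul_smul]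
  module


-- ====== the invariant ======

structure GoodPair (Φ : Set V) (U : Submodule ℝ V) (lam : V) (w w' : V → V) : Prop where
  li : ∀ x, w' (w x) = x
  addw : ∀ x y, w (x + y) = w x + w y
  addw' : ∀ x y, w' (x + y) = w' x + w' y
  innw : ∀ x y, ⟪w x, w y⟫ = ⟪x, y⟫
  roots : ∀ α ∈ Φ, w α ∈ Φ
  uw : ∀ u ∈ U, w u ∈ U
  uw' : ∀ u ∈ U, w' u ∈ U
  lamw : w lam - lam ∈ U
  lamw' : w' lam - lam ∈ U

lemma GoodPair.id (Φ : Set V) (U : Submodule ℝ V) (lam : V) :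
    GoodPair Φ U lam _root_.id _root_.id := by
  constructor <;> simp

lemma GoodPair.comp (Φ : Set V) (hRS : IsRootSystem Φ) {U : Submodule ℝ V} {lam : V}
    {w w' : V → V} (P : GoodPair Φ U lam w w') {γ : V} (hγΦ : γ ∈ Φ) (hγU : γ ∈ U) :
    GoodPair Φ U lam (rfl' γ ∘ w) (w' ∘ rfl' γ) := by
  have hγ0 : γ ≠ 0 := fun h => hRS.2.1 (h ▸ hγΦ)
  have hg : ⟪γ, γ⟫ ≠ 0 := fun h => hγ0 (inner_self_eq_zero.mp h)
  have hUr : ∀ u ∈ U, rfl' γ u ∈ U := fun u hu =>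
    Submodule.sub_mem U hu (Submodule.smul_mem U _ hγU)
  constructor
  · intro x; simp [rfl'_invol hg, P.li]
  · intro x y; simp [rfl'_add, P.addw]
  · intro x y; simp [rfl'_add, P.addw']
  · intro x y; simp [rfl'_inner hg, P.innw]
  · intro α hα; exact hRS.2.2.2.1 γ hγΦ (w α) (P.roots α hα)
  · intro u hu; exact hUr _ (P.uw u hu)
  · intro u hu; exact P.uw' _ (hUr u hu)
  · show rfl' γ (w lam) - lam ∈ U
    have : rfl' γ (w lam) - lam = (w lam - lam) - ⟪w lam, coroot γ⟫ • γ := by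
      rw [rfl']; abel
    rw [this]
    exact Submodule.sub_mem U P.lamw (Submodule.smul_mem U _ hγU)
  · show w' (rfl' γ lam) - lam ∈ U
    have h1 : rfl' γ lam = lam + (-⟪lam, coroot γ⟫) • γ := by rw [rfl']; module
    have : w' (rfl' γ lam) - lam = (w' lam - lam) + w' ((-⟪lam, coroot γ⟫) • γ) := by
      rw [h1, P.addw']; abel
    rw [this]
    exact Submodule.add_mem U P.lamw' (P.uw' _ (Submodule.smul_mem U _ hγU))

lemma mem_fs_of_reach {Φp : Set V} {lam mu : V}
    (h : Relation.ReflTransGen (fire Φp) lam mu) : mu - lam ∈ firingSpan Φp lam :=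
  Submodule.subset_span ⟨mu, h, rfl⟩

lemma key (Φ Φp : Set V) (hRS : IsRootSystem Φ) (hp : IsPositiveSystem Φ Φp) (lam : V) :
    ∀ mu, Relation.ReflTransGen (fire Φ) lam mu →
    ∃ w w' : V → V, GoodPair Φ (firingSpan Φp lam) lam w w' ∧
      Relation.ReflTransGen (fire Φp) lam (w mu) := by
  intro mu h
  induction h with
  | refl => exact ⟨_root_.id, _root_.id, GoodPair.id Φ _ lam, Relation.ReflTransGen.refl⟩
  | @tail b c hab step ih =>
    obtain ⟨w, w', P, hreach⟩ := ih
    obtain ⟨β, hβΦ, horth, rfl⟩ := step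
    have hwβΦ : w β ∈ Φ := P.roots β hβΦ
    have horth' : ⟪w b, coroot (w β)⟫ = 0 := by
      rw [inner_coroot_eq_zero_iff' w P.innw]; exact horth
    by_cases hpos : w β ∈ Φp
    · refine ⟨w, w', P, ?_⟩
      rw [P.addw]
      exact hreach.tail ⟨w β, hpos, horth', rfl⟩
    · have hγp : -(w β) ∈ Φp := ((hp.2.1 (w β) hwβΦ).1).resolve_left hpos
      set γ := -(w β) with hγdef
      have hγΦ : γ ∈ Φ := hp.1 hγp
      have hγ0 : γ ≠ 0 := fun h => hRS.2.1 (h ▸ hγΦ)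
      have hg : ⟪γ, γ⟫ ≠ 0 := fun h => hγ0 (inner_self_eq_zero.mp h)
      have horthγ : ⟪w b, coroot γ⟫ = 0 := by
        rw [hγdef, coroot_neg, inner_neg_right, horth', neg_zero]
      have hreach2 : Relation.ReflTransGen (fire Φp) lam (w b + γ) :=
        hreach.tail ⟨γ, hγp, horthγ, rfl⟩
      have hγU : γ ∈ firingSpan Φp lam := by
        have h1 := mem_fs_of_reach hreach
        have h2 := mem_fs_of_reach hreach2
        have : γ = (w b + γ - lam) - (w b - lam) := by abel
        rw [this]; exact Submodule.sub_mem _ h2 h1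
      refine ⟨rfl' γ ∘ w, w' ∘ rfl' γ, P.comp Φ hRS hγΦ hγU, ?_⟩
      have hwβ : w β = -γ := by rw [hγdef, neg_neg]
      have : (rfl' γ ∘ w) (b + β) = w b + γ := by
        show rfl' γ (w (b + β)) = _
        rw [P.addw, hwβ, rfl', inner_add_left, horthγ, inner_neg_left, inner_coroot_self hg]
        module
      rw [this]; exact hreach2

lemma span_all_eq (Φ Φp : Set V) (hRS : IsRootSystem Φ) (hp : IsPositiveSystem Φ Φp) (lam : V) :
    firingSpan Φp lam = firingSpan Φ lam := by
  apply le_antisymm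
  · apply Submodule.span_mono
    rintro d ⟨mu, h, rfl⟩
    exact ⟨mu, Relation.ReflTransGen.mono (show ∀ a b, fire Φp a b → fire Φ a b from fun _ _ ⟨α, hα, h1, h2⟩ => ⟨α, hp.1 hα, h1, h2⟩) _ _ h, rfl⟩
  · rw [show firingSpan Φ lam = Submodule.span ℝ
        {d | ∃ mu, Relation.ReflTransGen (fire Φ) lam mu ∧ d = mu - lam} from rfl]
    apply Submodule.span_le.2
    rintro d ⟨mu, h, rfl⟩
    obtain ⟨w, w', P, hreach⟩ := key Φ Φp hRS hp lam mu h
    have h1 : w mu - lam ∈ firingSpan Φp lam := mem_fs_of_reach hreach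
    have hsub : w' (w mu - lam) = mu - w' lam := by
      have h2 := P.addw' (w mu - lam) lam
      rw [sub_add_cancel, P.li] at h2
      exact eq_sub_of_add_eq h2.symm
    have h3 : mu - lam = w' (w mu - lam) + (w' lam - lam) := by rw [hsub]; abel
    rw [SetLike.mem_coe, h3]
    exact Submodule.add_mem _ (P.uw' _ h1) P.lamw'

lemma weyl_root_mem (Φ : Set V) (hRS : IsRootSystem Φ) {g : V ≃ₗᵢ[ℝ] V}
    (hg : g ∈ weylGroup Φ) : ∀ α ∈ Φ, g α ∈ Φ := by
  refine Subgroup.closure_induction (p := fun x _ => ∀ α ∈ Φ, x α ∈ Φ) ?_ ?_ ?_ ?_ hg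
  · rintro x ⟨α, hα, hx⟩ β hβ
    rw [hx β]; exact hRS.2.2.2.1 α hα β hβ
  · intro α hα; simpa using hα
  · intro x y _ _ hx hy α hα
    exact hx _ (hy α hα)
  · intro x _ hmap α hα
    have hinj : Set.InjOn x Φ := fun a _ b _ h => x.injective h
    have hbij := (Set.Finite.injOn_iff_bijOn_of_mapsTo hRS.1 (fun a ha => hmap a ha)).1 hinj
    obtain ⟨β, hβ, hxβ⟩ := hbij.surjOn hα
    have hx : x⁻¹ α = β := by
      rw [← hxβ, show x⁻¹ (x β) = (x⁻¹ * x) β from rfl, inv_mul_cancel]; rfl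
    rw [hx]; exact hβ

lemma rtg_fire_map (Φ : Set V) (hRS : IsRootSystem Φ) {g : V ≃ₗᵢ[ℝ] V}
    (hg : g ∈ weylGroup Φ) {x y : V} (h : Relation.ReflTransGen (fire Φ) x y) :
    Relation.ReflTransGen (fire Φ) (g x) (g y) := by
  refine Relation.ReflTransGen.lift g ?_ _ _ h
  rintro a b ⟨α, hα, h0, rfl⟩
  show fire Φ (g a) (g (a + α))
  refine ⟨g α, weyl_root_mem Φ hRS hg α hα, ?_, by rw [map_add]⟩
  rw [inner_coroot_eq_zero_iff' g (fun u v => g.inner_map_map u v)]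
  exact h0

lemma fs_map_le (Φ : Set V) (hRS : IsRootSystem Φ) {g : V ≃ₗᵢ[ℝ] V}
    (hg : g ∈ weylGroup Φ) (lam : V) :
    Submodule.map g.toLinearEquiv.toLinearMap (firingSpan Φ lam) ≤ firingSpan Φ (g lam) := by
  rw [show firingSpan Φ lam = Submodule.span ℝ
      {d | ∃ mu, Relation.ReflTransGen (fire Φ) lam mu ∧ d = mu - lam} from rfl,
    Submodule.map_span]
  apply Submodule.span_le.2
  rintro _ ⟨d, ⟨mu, h, rfl⟩, rfl⟩
  exact Submodule.subset_span ⟨g mu, rtg_fire_map Φ hRS hg h, by simp⟩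

lemma fs_equiv (Φ : Set V) (hRS : IsRootSystem Φ) {g : V ≃ₗᵢ[ℝ] V}
    (hg : g ∈ weylGroup Φ) (lam : V) :
    firingSpan Φ (g lam) = Submodule.map g.toLinearEquiv.toLinearMap (firingSpan Φ lam) := by
  have hcan1 : ∀ v, g⁻¹ (g v) = v := fun v => by
    rw [show g⁻¹ (g v) = (g⁻¹ * g) v from rfl, inv_mul_cancel]; rfl
  have hcan2 : ∀ v, g (g⁻¹ v) = v := fun v => by
    rw [show g (g⁻¹ v) = (g * g⁻¹) v from rfl, mul_inv_cancel]; rfl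
  apply le_antisymm
  · intro x hx
    have h1 : g⁻¹.toLinearEquiv.toLinearMap x ∈ firingSpan Φ (g⁻¹ (g lam)) :=
      fs_map_le Φ hRS (inv_mem hg) (g lam) ⟨x, hx, rfl⟩
    rw [hcan1] at h1
    exact ⟨g⁻¹ x, h1, hcan2 x⟩
  · exact fs_map_le Φ hRS hg lam


/-- the firing span of the positive roots equals the firing span of all roots,
and the firing span is Weyl-equivariant. -/
theorem firingSpan_all_and_equivariant (Φ Φp : Finset V)
    (hΦ : IsRootSystem (Φ : Set V)) (hp : IsPositiveSystem (Φ : Set V) (Φp : Set V))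
    (lam : V) (hlam : lam ∈ weightLattice (Φ : Set V)) :
    firingSpan (Φp : Set V) lam = firingSpan (Φ : Set V) lam ∧
      ∀ g ∈ weylGroup (Φ : Set V),
        firingSpan (Φp : Set V) (g lam) =
          Submodule.map g.toLinearEquiv.toLinearMap (firingSpan (Φp : Set V) lam) := by
  refine ⟨span_all_eq _ _ hΦ hp lam, fun g hg => ?_⟩
  rw [span_all_eq _ _ hΦ hp (g lam), span_all_eq _ _ hΦ hp lam]
  exact fs_equiv _ hΦ hg lam

end CF
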